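/- arXiv:2504.16375 — 2 statements merged into one kernel-verified Lean document; each statement's English description precedes it below -/
import Mathlib

section
/- Let G₄ be the m₂×m₂ lower shift matrix scaled by a nonzero scalar s over a field. With respect to the trace bilinear form ⟨M₁,M₂⟩ = Tr(M₁M₂) on m₂×m₂ matrices, the image of ad_{G₄} equals the orthogonal complement of the kernel of ad_{G₄}. -/
/-- The m₂×m₂ lower shift matrix scaled by `s`: entries `s` at positions (i, i-1). -/
def lowerShift (m₂ : ℕ) (K : Type*) [Field K] (s : K) : Matrix (Fin m₂) (Fin m₂) K :=
  Matrix.of fun i j => if (i : ℕ) = (j : ℕ) + 1 then s else 0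

/-- With respect to the trace bilinear form `⟨M₁,M₂⟩ = Tr(M₁M₂)`, the image of
`ad_{G₄}` equals the orthogonal complement of the kernel of `ad_{G₄}`. -/
theorem image_ad_lowerShift_eq_orthogonal_kernel (m₂ : ℕ) (hm₂ : 1 ≤ m₂)
    (K : Type*) [Field K] (s : K) (hs : s ≠ 0) :
    ∀ M₁ : Matrix (Fin m₂) (Fin m₂) K,
      (∃ M₂ : Matrix (Fin m₂) (Fin m₂) K,
          M₁ = lowerShift m₂ K s * M₂ - M₂ * lowerShift m₂ K s) ↔
        (∀ M₃ : Matrix (Fin m₂) (Fin m₂) K,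
          lowerShift m₂ K s * M₃ - M₃ * lowerShift m₂ K s = 0 →
            Matrix.trace (M₃ * M₁) = 0) := by
  set G := lowerShift m₂ K s with hG
  let B : LinearMap.BilinForm K (Matrix (Fin m₂) (Fin m₂) K) :=
    LinearMap.mk₂ K (fun M N => Matrix.trace (M * N))
      (fun M M' N => by simp [add_mul, Matrix.trace_add])
      (fun c M N => by simp [Matrix.smul_mul, Matrix.trace_smul, smul_eq_mul])
      (fun M N N' => by simp [mul_add, Matrix.trace_add])
      (fun c M N => by simp [Matrix.mul_smul, Matrix.trace_smul, smul_eq_mul])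
  let ad : Matrix (Fin m₂) (Fin m₂) K →ₗ[K] Matrix (Fin m₂) (Fin m₂) K := LinearMap.mulLeft K G - LinearMap.mulRight K G
  have had : ∀ M : Matrix (Fin m₂) (Fin m₂) K, ad M = G * M - M * G := fun M => rfl
  have hBapp : ∀ M N : Matrix (Fin m₂) (Fin m₂) K, B M N = Matrix.trace (M * N) := fun M N => rfl
  have hrefl : B.IsRefl := by
    intro M N h
    rw [hBapp, Matrix.trace_mul_comm]
    exact h
  have hnd : B.Nondegenerate := by
    refine (LinearMap.IsRefl.nondegenerate_iff_separatingLeft hrefl).mpr ?_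
    intro M h
    ext i j
    have := h (Matrix.single j i 1)
    rw [hBapp] at this
    rw [Matrix.trace_mul_comm] at this
    simpa [Matrix.trace, Matrix.mul_apply, Matrix.single, Matrix.diag,
      ite_and, Finset.sum_ite_eq, Finset.sum_ite_eq'] using this
  have hle : LinearMap.range ad ≤ B.orthogonal (LinearMap.ker ad) := by
    rintro _ ⟨M₂, rfl⟩ M₃ hM₃
    have hc : G * M₃ = M₃ * G := by
      rw [LinearMap.mem_ker, had] at hM₃
      exact sub_eq_zero.mp hM₃
    show B M₃ (ad M₂) = 0
    rw [hBapp, had]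
    have key : M₃ * (G * M₂ - M₂ * G) = G * (M₃ * M₂) - M₃ * M₂ * G := by
      rw [mul_sub, ← mul_assoc, ← hc]; noncomm_ring
    rw [key, Matrix.trace_sub, Matrix.trace_mul_comm, sub_self]
  have heq : LinearMap.range ad = B.orthogonal (LinearMap.ker ad) := by
    apply Submodule.eq_of_le_of_finrank_le hle
    have h1 := LinearMap.finrank_range_add_finrank_ker ad
    have h2 := LinearMap.BilinForm.finrank_orthogonal hnd (LinearMap.ker ad)
    omega
  intro M₁
  constructor
  · rintro ⟨M₂, rfl⟩ M₃ h3
    have hmem : (G * M₂ - M₂ * G) ∈ B.orthogonal (LinearMap.ker ad) := by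
      rw [← heq]
      exact ⟨M₂, (had M₂).symm⟩
    have h3' : M₃ ∈ LinearMap.ker ad := by
      rw [LinearMap.mem_ker, had]
      exact h3
    exact hmem M₃ h3'
  · intro h
    have hmem : M₁ ∈ B.orthogonal (LinearMap.ker ad) := by
      intro M₃ hM₃
      rw [LinearMap.mem_ker, had] at hM₃
      exact h M₃ hM₃
    rw [← heq] at hmem
    obtain ⟨M₂, hM₂⟩ := hmem
    exact ⟨M₂, by rw [← hM₂, had]⟩
end

section
/- Fix positive integers m₁, m₂ with l = m₁ + m₂, and a nonzero scalar s. The formal series ψ_A(z,s) = (s/m₁)^{(z−1/2)/m₁} · ∑_{j≥0} (−1)^j s^{(l/m₁)j} / (m₁^{(m₂/m₁)j} m₂^j j! Γ((z−1/2+m₂j)/m₁ + 1)) satisfies the linear difference equation ψ(z−m₁) − (1/s)(z−1/2)ψ(z) + ψ(z+m₂) = 0. -/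
open Complex

private lemma one_div_Gamma_step (x : ℂ) :
    1 / Complex.Gamma x = x / Complex.Gamma (x + 1) := by
  rcases eq_or_ne x 0 with rfl | hx
  · simp [Complex.Gamma_zero]
  · rw [Complex.Gamma_add_one x hx]
    rcases eq_or_ne (Complex.Gamma x) 0 with h | h
    · simp [h]
    · field_simp

private lemma div_Gamma_step (N D u : ℂ) :
    N / (D * Complex.Gamma u) = u * (N / (D * Complex.Gamma (u + 1))) := by
  have h := one_div_Gamma_step u
  calc N / (D * Complex.Gamma u) = N / D * (1 / Complex.Gamma u) := by ring
    _ = N / D * (u / Complex.Gamma (u + 1)) := by rw [h]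
    _ = u * (N / (D * Complex.Gamma (u + 1))) := by ring

private lemma cpow_div_nat (x : ℂ) (hx : x ≠ 0) (n : ℕ) (hn : 0 < n) (y : ℂ) :
    (x / (n : ℂ)) ^ y = x ^ y / (n : ℂ) ^ y := by
  have hn' : (0 : ℝ) < (n : ℝ) := by exact_mod_cast hn
  have hn0 : (n : ℂ) ≠ 0 := Nat.cast_ne_zero.mpr hn.ne'
  have hxn : x / (n : ℂ) ≠ 0 := div_ne_zero hx hn0
  have h1 : x / (n : ℂ) = ((((n : ℝ))⁻¹ : ℝ) : ℂ) * x := by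
    push_cast
    rw [div_eq_inv_mul]
  have hlogn : Complex.log ((n : ℂ)) = ((Real.log (n : ℝ) : ℝ) : ℂ) := by
    rw [show ((n : ℂ)) = (((n : ℝ) : ℝ) : ℂ) by push_cast; ring, Complex.ofReal_log hn'.le]
  rw [cpow_def_of_ne_zero hxn, cpow_def_of_ne_zero hx, cpow_def_of_ne_zero hn0, hlogn]
  rw [h1, Complex.log_ofReal_mul (by positivity) hx, Real.log_inv]
  rw [← Complex.exp_sub]
  congr 1
  push_cast
  ring

private lemma gamma_abs_lower (t : ℝ) :
    ∃ δ : ℝ, 0 < δ ∧ ∀ v : ℂ, v.im = t → 1 ≤ v.re →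
      δ ≤ ‖Complex.Gamma v‖ := by
  have hne : ∀ σ : ℝ, 1 ≤ σ → ∀ m : ℕ, (↑σ + ↑t * Complex.I) ≠ -↑m := by
    intro σ hσ m h
    have h' : (↑σ + ↑t * Complex.I).re = ((-↑m : ℂ)).re := by rw [h]
    simp at h'
    have : (0 : ℝ) ≤ (m : ℝ) := Nat.cast_nonneg m
    linarith
  have hcont : ContinuousOn
      (fun σ : ℝ => ‖Complex.Gamma (↑σ + ↑t * Complex.I)‖) (Set.Icc 1 2) := by
    intro σ hσ
    apply ContinuousAt.continuousWithinAt
    have hd : DifferentiableAt ℂ Complex.Gamma (↑σ + ↑t * Complex.I) :=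
      Complex.differentiableAt_Gamma _ (hne σ hσ.1)
    have h2 : ContinuousAt (fun σ : ℝ => (↑σ + ↑t * Complex.I : ℂ)) σ :=
      ((Complex.continuous_ofReal).add continuous_const).continuousAt
    exact ContinuousAt.comp (continuous_norm.continuousAt)
      (ContinuousAt.comp hd.continuousAt h2)
  obtain ⟨σ₀, hσ₀, hmin⟩ := isCompact_Icc.exists_isMinOn
    (Set.nonempty_Icc.mpr (by norm_num)) hcont
  refine ⟨‖Complex.Gamma (↑σ₀ + ↑t * Complex.I)‖, ?_, ?_⟩
  · have hne0 : Complex.Gamma (↑σ₀ + ↑t * Complex.I) ≠ 0 := by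
      apply Complex.Gamma_ne_zero_of_re_pos
      simp
      linarith [hσ₀.1]
    exact (norm_pos_iff.mpr hne0)
  · set δ := ‖Complex.Gamma (↑σ₀ + ↑t * Complex.I)‖ with hδ
    have key : ∀ n : ℕ, ∀ v : ℂ, v.im = t → 1 ≤ v.re → v.re ≤ 2 + n →
        δ ≤ ‖Complex.Gamma v‖ := by
      intro n
      induction n with
      | zero =>
        intro v hvim hv1 hv2
        have hv : v = ↑v.re + ↑t * Complex.I := by
          apply Complex.ext <;> simp [hvim]
        rw [hv]
        exact hmin ⟨hv1, by norm_num at hv2 ⊢; linarith⟩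
      | succ n ih =>
        intro v hvim hv1 hv2
        by_cases hc : v.re ≤ 2 + n
        · exact ih v hvim hv1 hc
        push_neg at hc
        have hn0 : (0 : ℝ) ≤ (n : ℝ) := Nat.cast_nonneg n
        have hre1 : (v - 1).re = v.re - 1 := by simp
        have him1 : (v - 1).im = t := by simp [hvim]
        have h1le : 1 ≤ (v - 1).re := by rw [hre1]; linarith
        have hne0 : v - 1 ≠ 0 := by
          intro h
          have h' := congrArg Complex.re h
          rw [hre1] at h'
          simp at h'
          linarith
        have hΓ : Complex.Gamma v = (v - 1) * Complex.Gamma (v - 1) := by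
          have h := Complex.Gamma_add_one (v - 1) hne0
          rw [sub_add_cancel] at h
          exact h
        rw [hΓ, norm_mul]
        have habs1 : 1 ≤ ‖v - 1‖ := by
          calc (1 : ℝ) ≤ (v - 1).re := h1le
            _ ≤ ‖v - 1‖ := Complex.re_le_norm _
        have hrec := ih (v - 1) him1 h1le (by
          rw [hre1]
          push_cast at hv2 ⊢
          linarith)
        calc δ ≤ ‖Complex.Gamma (v - 1)‖ := hrec
          _ = 1 * ‖Complex.Gamma (v - 1)‖ := (one_mul _).symm
          _ ≤ ‖v - 1‖ * ‖Complex.Gamma (v - 1)‖ :=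
            mul_le_mul_of_nonneg_right habs1 (norm_nonneg _)
    intro v hvim hv1
    refine key ⌈v.re⌉₊ v hvim hv1 ?_
    have := Nat.le_ceil v.re
    linarith

private noncomputable def aTerm (m₁ m₂ : ℕ) (s z : ℂ) (j : ℕ) : ℂ :=
  ((-1 : ℂ) ^ j * s ^ ((((m₁ : ℂ) + (m₂ : ℂ)) / (m₁ : ℂ)) * (j : ℂ))) /
    ((m₁ : ℂ) ^ (((m₂ : ℂ) / (m₁ : ℂ)) * (j : ℂ)) * (m₂ : ℂ) ^ j *
      (j.factorial : ℂ) *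
      Complex.Gamma ((z - 1/2 + (m₂ : ℂ) * (j : ℂ)) / (m₁ : ℂ) + 1))

private lemma Lsum (m₁ m₂ : ℕ) (hm₁ : 0 < m₁) (hm₂ : 0 < m₂) (s : ℂ) (hs : s ≠ 0) (z : ℂ)
    (c : ℕ → ℂ) (hc : ∀ j, ‖c j‖ ≤ (j : ℝ) + 1) :
    Summable (fun j : ℕ => c j * aTerm m₁ m₂ s z j) := by
  have hm₁R : (0 : ℝ) < (m₁ : ℝ) := by exact_mod_cast hm₁
  have hm₁R1 : (1 : ℝ) ≤ (m₁ : ℝ) := by exact_mod_cast hm₁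
  have hm₂R1 : (1 : ℝ) ≤ (m₂ : ℝ) := by exact_mod_cast hm₂
  set Ar : ℝ := ((m₁ : ℝ) + (m₂ : ℝ)) / (m₁ : ℝ) with hAr
  set Br : ℝ := (m₂ : ℝ) / (m₁ : ℝ) with hBr
  set q : ℝ := ‖s‖ ^ Ar with hq
  have hq0 : 0 ≤ q := Real.rpow_nonneg (norm_nonneg s) _
  obtain ⟨δ, hδ, hδbd⟩ := gamma_abs_lower (z.im / (m₁ : ℝ))
  set J : ℕ := ⌈|(z - 1/2 : ℂ).re|⌉₊ with hJ
  -- summability of the comparison series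
  have S1 : Summable (fun n : ℕ => q ^ n / n.factorial) := Real.summable_pow_div_factorial q
  have S2 : Summable (fun n : ℕ => (n : ℝ) * (q ^ n / n.factorial)) := by
    apply (summable_nat_add_iff 1).mp
    have he : (fun n : ℕ => ((n + 1 : ℕ) : ℝ) * (q ^ (n + 1) / (n + 1).factorial))
        = fun n : ℕ => q * (q ^ n / n.factorial) := by
      funext n
      have h0 : ((n + 1).factorial : ℝ) = ((n : ℝ) + 1) * (n.factorial : ℝ) := by
        rw [Nat.factorial_succ]; push_cast; ring
      have hn1 : ((n : ℝ) + 1) ≠ 0 := by positivity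
      have hf : ((n.factorial : ℝ)) ≠ 0 := by positivity
      rw [h0]
      push_cast
      field_simp
      ring
    rw [he]
    exact S1.mul_left q
  have S3 : Summable (fun n : ℕ => ((n : ℝ) + 1) * (q ^ n / n.factorial)) := by
    have := S2.add S1
    convert this using 1
    funext n
    ring
  have Sg : Summable (fun j : ℕ =>
      (((j + J : ℕ) : ℝ) + 1) * (q ^ (j + J) / (j + J).factorial) * δ⁻¹) :=
    ((summable_nat_add_iff J).mpr S3).mul_right δ⁻¹
  apply (summable_nat_add_iff J).mp
  apply Summable.of_norm_bounded Sg
  intro j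
  set k : ℕ := j + J with hk
  -- compute norms
  have hA : ((((m₁ : ℂ) + (m₂ : ℂ)) / (m₁ : ℂ)) * (k : ℂ)) = ((Ar * k : ℝ) : ℂ) := by
    rw [hAr]; push_cast; ring
  have hB : (((m₂ : ℂ) / (m₁ : ℂ)) * (k : ℂ)) = ((Br * k : ℝ) : ℂ) := by
    rw [hBr]; push_cast; ring
  have hN : ‖(-1 : ℂ) ^ k *
      s ^ ((((m₁ : ℂ) + (m₂ : ℂ)) / (m₁ : ℂ)) * (k : ℂ))‖ = q ^ k := by
    rw [norm_mul, norm_pow, norm_neg, norm_one, one_pow, one_mul]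
    rw [hA, Complex.norm_cpow_of_ne_zero hs]
    simp only [Complex.ofReal_re, Complex.ofReal_im, mul_zero, Real.exp_zero, div_one]
    rw [Real.rpow_mul (norm_nonneg s), Real.rpow_natCast]
  have hM1 : ‖(m₁ : ℂ) ^ (((m₂ : ℂ) / (m₁ : ℂ)) * (k : ℂ))‖
      = (m₁ : ℝ) ^ (Br * (k : ℝ)) := by
    rw [hB, ← Complex.ofReal_natCast m₁, Complex.norm_cpow_eq_rpow_re_of_pos hm₁R]
    simp
  have hM1ge : 1 ≤ (m₁ : ℝ) ^ (Br * (k : ℝ)) := by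
    apply Real.one_le_rpow hm₁R1
    have : (0 : ℝ) ≤ Br := by rw [hBr]; positivity
    positivity
  have hM2ge : 1 ≤ (m₂ : ℝ) ^ k := one_le_pow₀ hm₂R1
  have hΓim : ((z - 1/2 + (m₂ : ℂ) * (k : ℂ)) / (m₁ : ℂ) + 1).im = z.im / (m₁ : ℝ) := by
    rw [← Complex.ofReal_natCast m₁]
    simp [Complex.add_im, Complex.div_ofReal_im]
  have hΓre : 1 ≤ ((z - 1/2 + (m₂ : ℂ) * (k : ℂ)) / (m₁ : ℂ) + 1).re := by
    rw [← Complex.ofReal_natCast m₁]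
    have hre : ((z - 1/2 + (m₂ : ℂ) * (k : ℂ)) / ((m₁ : ℝ) : ℂ) + 1).re
        = ((z - 1/2).re + (m₂ : ℝ) * (k : ℝ)) / (m₁ : ℝ) + 1 := by
      rw [Complex.add_re, Complex.div_ofReal_re, Complex.one_re]
      congr 2
      rw [Complex.add_re]
      congr 1
      rw [show ((m₂ : ℂ) * (k : ℂ)) = (((m₂ : ℝ) * (k : ℝ) : ℝ) : ℂ) by push_cast; ring,
        Complex.ofReal_re]
    rw [hre]
    have h1 : |(z - 1/2 : ℂ).re| ≤ (J : ℝ) := Nat.le_ceil _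
    have h2 : (J : ℝ) ≤ (k : ℝ) := by
      rw [hk]; push_cast; linarith [Nat.cast_nonneg (α := ℝ) j]
    have h3 : (k : ℝ) ≤ (m₂ : ℝ) * (k : ℝ) :=
      le_mul_of_one_le_left (Nat.cast_nonneg k) hm₂R1
    have h4 : -(|(z - 1/2 : ℂ).re|) ≤ (z - 1/2 : ℂ).re := neg_abs_le _
    have h5 : 0 ≤ (z - 1/2).re + (m₂ : ℝ) * (k : ℝ) := by linarith
    have := div_nonneg h5 hm₁R.le
    linarith
  have hΓge : δ ≤ ‖Complex.Gamma
      ((z - 1/2 + (m₂ : ℂ) * (k : ℂ)) / (m₁ : ℂ) + 1)‖ :=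
    hδbd _ hΓim hΓre
  have hfge : (0 : ℝ) < (k.factorial : ℝ) := by positivity
  -- assemble
  have habsterm : ‖aTerm m₁ m₂ s z k‖
      ≤ q ^ k / ((k.factorial : ℝ) * δ) := by
    unfold aTerm
    rw [norm_div, hN, norm_mul, norm_mul, norm_mul, hM1, norm_pow, Complex.norm_natCast,
      Complex.norm_natCast]
    apply div_le_div_of_nonneg_left (by positivity) (by positivity)
    calc (k.factorial : ℝ) * δ
        ≤ (k.factorial : ℝ) * ‖Complex.Gamma
          ((z - 1/2 + (m₂ : ℂ) * (k : ℂ)) / (m₁ : ℂ) + 1)‖ :=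
          mul_le_mul_of_nonneg_left hΓge hfge.le
      _ = 1 * ((k.factorial : ℝ) * ‖Complex.Gamma
          ((z - 1/2 + (m₂ : ℂ) * (k : ℂ)) / (m₁ : ℂ) + 1)‖) := by ring
      _ ≤ ((m₁ : ℝ) ^ (Br * (k : ℝ)) * (m₂ : ℝ) ^ k) *
          ((k.factorial : ℝ) * ‖Complex.Gamma
          ((z - 1/2 + (m₂ : ℂ) * (k : ℂ)) / (m₁ : ℂ) + 1)‖) := by
          apply mul_le_mul_of_nonneg_right _ (by positivity)
          nlinarith
      _ = (m₁ : ℝ) ^ (Br * (k : ℝ)) * (m₂ : ℝ) ^ k * (k.factorial : ℝ) *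
          ‖Complex.Gamma
          ((z - 1/2 + (m₂ : ℂ) * (k : ℂ)) / (m₁ : ℂ) + 1)‖ := by ring
  calc ‖c k * aTerm m₁ m₂ s z k‖
      = ‖c k‖ * ‖aTerm m₁ m₂ s z k‖ := by
        rw [norm_mul]
    _ ≤ ((k : ℝ) + 1) * (q ^ k / ((k.factorial : ℝ) * δ)) := by
        apply mul_le_mul (hc k) habsterm (norm_nonneg _)
        positivity
    _ = ((k : ℕ) : ℝ) * (q ^ k / (k.factorial : ℝ)) * δ⁻¹
        + 1 * (q ^ k / (k.factorial : ℝ)) * δ⁻¹ := by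
        ring
    _ = (((j + J : ℕ) : ℝ) + 1) * (q ^ (j + J) / (j + J).factorial) * δ⁻¹ := by
        rw [hk]; ring

private lemma key3 (s SB MB NB SA M1 m2j F G m2 jc : ℂ) (hMB : MB ≠ 0) (hm2 : m2 ≠ 0)
    (hj : jc + 1 ≠ 0) (hF : F ≠ 0) (hG : G ≠ 0) (hM1 : M1 ≠ 0) (hm2j : m2j ≠ 0) :
    s * (SB / MB) * (NB * SA / (M1 * m2j * F * G)) =
      -m2 * ((jc + 1) * (NB * -1 * (SA * (s * SB)) /
        (M1 * MB * (m2j * m2) * ((jc + 1) * F) * G))) := by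
  have d1 : MB * (M1 * m2j * F * G) ≠ 0 :=
    mul_ne_zero hMB (mul_ne_zero (mul_ne_zero (mul_ne_zero hM1 hm2j) hF) hG)
  have d2 : M1 * MB * (m2j * m2) * ((jc + 1) * F) * G ≠ 0 :=
    mul_ne_zero (mul_ne_zero (mul_ne_zero (mul_ne_zero hM1 hMB)
      (mul_ne_zero hm2j hm2)) (mul_ne_zero hj hF)) hG
  calc s * (SB / MB) * (NB * SA / (M1 * m2j * F * G))
      = (s * SB * NB * SA) / (MB * (M1 * m2j * F * G)) := by ring
    _ = (m2 * (jc + 1) * (NB * SA * (s * SB))) / (M1 * MB * (m2j * m2) * ((jc + 1) * F) * G) := by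
        rw [div_eq_div_iff d1 d2]; ring
    _ = -m2 * ((jc + 1) * (NB * -1 * (SA * (s * SB)) /
        (M1 * MB * (m2j * m2) * ((jc + 1) * F) * G))) := by ring

private lemma L1 (m₁ m₂ : ℕ) (hm₁ : 0 < m₁) (s z : ℂ) (j : ℕ) :
    (m₁ : ℂ) * aTerm m₁ m₂ s (z - (m₁ : ℂ)) j
      = (z - 1/2) * aTerm m₁ m₂ s z j + (m₂ : ℂ) * ((j : ℂ) * aTerm m₁ m₂ s z j) := by
  have hm : (m₁ : ℂ) ≠ 0 := Nat.cast_ne_zero.mpr hm₁.ne'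
  unfold aTerm
  have h0 : (z - (m₁ : ℂ) - 1/2 + (m₂ : ℂ) * (j : ℂ)) / (m₁ : ℂ) + 1
      = (z - 1/2 + (m₂ : ℂ) * (j : ℂ)) / (m₁ : ℂ) := by
    field_simp
    ring
  rw [h0, div_Gamma_step]
  have hu : (m₁ : ℂ) * ((z - 1/2 + (m₂ : ℂ) * (j : ℂ)) / (m₁ : ℂ))
      = z - 1/2 + (m₂ : ℂ) * (j : ℂ) := by
    field_simp
  have habs : ∀ X u : ℂ, (m₁ : ℂ) * u = z - 1/2 + (m₂ : ℂ) * (j : ℂ) →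
      (m₁ : ℂ) * (u * X) = (z - 1/2) * X + (m₂ : ℂ) * ((j : ℂ) * X) := by
    intro X u h
    linear_combination X * h
  exact habs _ _ hu

set_option maxHeartbeats 1000000 in
private lemma L3 (m₁ m₂ : ℕ) (hm₁ : 0 < m₁) (hm₂ : 0 < m₂) (s : ℂ) (hs : s ≠ 0)
    (z : ℂ) (j : ℕ) :
    s * (s ^ ((m₂ : ℂ) / (m₁ : ℂ)) / (m₁ : ℂ) ^ ((m₂ : ℂ) / (m₁ : ℂ))) *
        aTerm m₁ m₂ s (z + (m₂ : ℂ)) j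
      = -(m₂ : ℂ) * (((j : ℂ) + 1) * aTerm m₁ m₂ s z (j + 1)) := by
  have hm : (m₁ : ℂ) ≠ 0 := Nat.cast_ne_zero.mpr hm₁.ne'
  have hm2 : (m₂ : ℂ) ≠ 0 := Nat.cast_ne_zero.mpr hm₂.ne'
  unfold aTerm
  have hGarg : (z + (m₂ : ℂ) - 1/2 + (m₂ : ℂ) * (j : ℂ)) / (m₁ : ℂ) + 1
      = (z - 1/2 + (m₂ : ℂ) * ((j + 1 : ℕ) : ℂ)) / (m₁ : ℂ) + 1 := by
    push_cast; ring
  rw [hGarg]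
  have e1 : ((((m₁ : ℂ) + (m₂ : ℂ)) / (m₁ : ℂ)) * ((j + 1 : ℕ) : ℂ))
      = (((m₁ : ℂ) + (m₂ : ℂ)) / (m₁ : ℂ)) * (j : ℂ) + (1 + (m₂ : ℂ) / (m₁ : ℂ)) := by
    push_cast
    field_simp
  have e2 : (((m₂ : ℂ) / (m₁ : ℂ)) * ((j + 1 : ℕ) : ℂ))
      = ((m₂ : ℂ) / (m₁ : ℂ)) * (j : ℂ) + (m₂ : ℂ) / (m₁ : ℂ) := by
    push_cast; ring
  rw [e1, Complex.cpow_add _ _ hs, Complex.cpow_add _ _ hs, Complex.cpow_one,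
    e2, Complex.cpow_add _ _ hm, pow_succ (-1 : ℂ), pow_succ (m₂ : ℂ),
    Nat.factorial_succ]
  push_cast
  rcases eq_or_ne (Complex.Gamma ((z - 1/2 + (m₂ : ℂ) * ((j : ℂ) + 1)) / (m₁ : ℂ) + 1)) 0
    with hG | hG
  · rw [hG]
    simp only [mul_zero, div_zero, zero_mul, neg_zero, mul_zero]
  · have h1 : s ^ ((((m₁ : ℂ) + (m₂ : ℂ)) / (m₁ : ℂ)) * (j : ℂ)) ≠ 0 := by
      intro h; exact hs ((Complex.cpow_eq_zero_iff _ _).mp h).1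
    have h2 : (m₁ : ℂ) ^ (((m₂ : ℂ) / (m₁ : ℂ)) * (j : ℂ)) ≠ 0 := by
      intro h; exact hm ((Complex.cpow_eq_zero_iff _ _).mp h).1
    have h3 : (m₁ : ℂ) ^ ((m₂ : ℂ) / (m₁ : ℂ)) ≠ 0 := by
      intro h; exact hm ((Complex.cpow_eq_zero_iff _ _).mp h).1
    have h4 : s ^ ((m₂ : ℂ) / (m₁ : ℂ)) ≠ 0 := by
      intro h; exact hs ((Complex.cpow_eq_zero_iff _ _).mp h).1
    have h5 : ((j : ℂ) + 1) ≠ 0 := Nat.cast_add_one_ne_zero j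
    have h6 : ((j.factorial : ℕ) : ℂ) ≠ 0 := Nat.cast_ne_zero.mpr j.factorial_pos.ne'
    exact key3 _ _ _ _ _ _ _ _ _ _ _ h3 hm2 h5 h6 hG h2 (pow_ne_zero j hm2)

/-- The formal quasi-wave function
`ψ_A(z,s) = (s/m₁)^{(z−1/2)/m₁} ∑_{j≥0} (−1)^j s^{(l/m₁)j} /
  (m₁^{(m₂/m₁)j} m₂^j j! Γ((z−1/2+m₂j)/m₁+1))`
satisfies the linear difference equation
`ψ(z−m₁) − (1/s)(z−1/2)ψ(z) + ψ(z+m₂) = 0`. -/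
theorem psiA_satisfies_wave_equation (m₁ m₂ : ℕ) (hm₁ : 0 < m₁) (hm₂ : 0 < m₂)
    (s : ℂ) (hs : s ≠ 0) (ψ : ℂ → ℂ)
    (hψ : ∀ z : ℂ, ψ z =
      ((s / (m₁ : ℂ)) ^ ((z - 1/2) / (m₁ : ℂ))) *
        ∑' j : ℕ, ((-1 : ℂ) ^ j * s ^ ((((m₁ : ℂ) + (m₂ : ℂ)) / (m₁ : ℂ)) * (j : ℂ))) /
          ((m₁ : ℂ) ^ (((m₂ : ℂ) / (m₁ : ℂ)) * (j : ℂ)) * (m₂ : ℂ) ^ j *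
            (j.factorial : ℂ) *
            Complex.Gamma ((z - 1/2 + (m₂ : ℂ) * (j : ℂ)) / (m₁ : ℂ) + 1))) :
    ∀ z : ℂ, ψ (z - m₁) - (1 / s) * (z - 1/2) * ψ z + ψ (z + m₂) = 0 := by
  have hψ' : ∀ x : ℂ, ψ x =
      ((s / (m₁ : ℂ)) ^ ((x - 1/2) / (m₁ : ℂ))) * ∑' j : ℕ, aTerm m₁ m₂ s x j := hψ
  intro z
  have hm : (m₁ : ℂ) ≠ 0 := Nat.cast_ne_zero.mpr hm₁.ne'
  have hm2 : (m₂ : ℂ) ≠ 0 := Nat.cast_ne_zero.mpr hm₂.ne'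
  have hc0 : s / (m₁ : ℂ) ≠ 0 := div_ne_zero hs hm
  -- summability facts
  have Sa : Summable (fun j : ℕ => aTerm m₁ m₂ s z j) := by
    have := Lsum m₁ m₂ hm₁ hm₂ s hs z (fun _ => 1) (by
      intro j
      simp
      try positivity)
    simpa using this
  have Sja : Summable (fun j : ℕ => (j : ℂ) * aTerm m₁ m₂ s z j) := by
    apply Lsum m₁ m₂ hm₁ hm₂ s hs z (fun j => (j : ℂ))
    intro j
    rw [Complex.norm_natCast]
    linarith
  -- prefactor identities
  have hpre1 : (s / (m₁ : ℂ)) ^ ((z - (m₁ : ℂ) - 1/2) / (m₁ : ℂ))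
      = (s / (m₁ : ℂ)) ^ ((z - 1/2) / (m₁ : ℂ)) * ((m₁ : ℂ) / s) := by
    have he : (z - (m₁ : ℂ) - 1/2) / (m₁ : ℂ) = (z - 1/2) / (m₁ : ℂ) - 1 := by
      field_simp
      ring
    rw [he, Complex.cpow_sub _ _ hc0, Complex.cpow_one, div_eq_mul_inv, inv_div]
  have hpre3 : (s / (m₁ : ℂ)) ^ ((z + (m₂ : ℂ) - 1/2) / (m₁ : ℂ))
      = (s / (m₁ : ℂ)) ^ ((z - 1/2) / (m₁ : ℂ)) *
        (s ^ ((m₂ : ℂ) / (m₁ : ℂ)) / (m₁ : ℂ) ^ ((m₂ : ℂ) / (m₁ : ℂ))) := by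
    have he : (z + (m₂ : ℂ) - 1/2) / (m₁ : ℂ)
        = (z - 1/2) / (m₁ : ℂ) + (m₂ : ℂ) / (m₁ : ℂ) := by
      field_simp
      ring
    rw [he, Complex.cpow_add _ _ hc0, cpow_div_nat s hs m₁ hm₁ ((m₂ : ℂ) / (m₁ : ℂ))]
  -- sum identities
  have E1 : (m₁ : ℂ) * ∑' j : ℕ, aTerm m₁ m₂ s (z - (m₁ : ℂ)) j
      = (z - 1/2) * (∑' j : ℕ, aTerm m₁ m₂ s z j)
        + (m₂ : ℂ) * ∑' j : ℕ, (j : ℂ) * aTerm m₁ m₂ s z j := by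
    rw [← tsum_mul_left]
    rw [tsum_congr (fun j => L1 m₁ m₂ hm₁ s z j)]
    rw [Summable.tsum_add (Sa.mul_left _) (Sja.mul_left _), tsum_mul_left, tsum_mul_left]
  have E3 : s * (s ^ ((m₂ : ℂ) / (m₁ : ℂ)) / (m₁ : ℂ) ^ ((m₂ : ℂ) / (m₁ : ℂ))) *
        ∑' j : ℕ, aTerm m₁ m₂ s (z + (m₂ : ℂ)) j
      = -(m₂ : ℂ) * ∑' j : ℕ, (j : ℂ) * aTerm m₁ m₂ s z j := by
    rw [← tsum_mul_left]
    rw [tsum_congr (fun j => L3 m₁ m₂ hm₁ hm₂ s hs z j)]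
    rw [tsum_mul_left]
    congr 1
    rw [Summable.tsum_eq_zero_add Sja]
    simp only [Nat.cast_zero, zero_mul, zero_add]
    exact tsum_congr fun n => by push_cast; ring
  have hss : s⁻¹ * s = 1 := inv_mul_cancel₀ hs
  rw [hψ' (z - (m₁ : ℂ)), hψ' z, hψ' (z + (m₂ : ℂ)), hpre1, hpre3]
  linear_combination ((s / (m₁ : ℂ)) ^ ((z - 1/2) / (m₁ : ℂ)) / s) * E1
    + ((s / (m₁ : ℂ)) ^ ((z - 1/2) / (m₁ : ℂ)) / s) * E3
    - ((s / (m₁ : ℂ)) ^ ((z - 1/2) / (m₁ : ℂ)) *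
        (s ^ ((m₂ : ℂ) / (m₁ : ℂ)) / (m₁ : ℂ) ^ ((m₂ : ℂ) / (m₁ : ℂ))) *
        ∑' j : ℕ, aTerm m₁ m₂ s (z + (m₂ : ℂ)) j) * hss
end
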